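/- Let δ > 0 and w: ℝ → (0,∞) a C² function satisfying w''(t) ≥ δ²w(t) - c·w(t)² for some c > 0, and suppose ε ∈ (0, δ²/(2c)). If t* < t₁ are such that w(t*) = ε and w'(t) < 0 for t ∈ [t*, t₁), and w''(t) > 0 whenever w(t) < 2ε, then there is a constant c₁ > 0 (independent of t*, t₁) with t - t* ≤ (1/δ)·log(w(t*)/w(t)) + c₁ for all t ∈ (t*, t₁]. -/

import Mathlib

set_option maxHeartbeats 1000000

open Set Real Filter

theorem stmt_17 (δ c ε : ℝ) (hδ : 0 < δ) (hc : 0 < c) (hε : 0 < ε) (hε' : ε < δ^2 / (2*c))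
    (w : ℝ → ℝ) (hw : ContDiff ℝ 2 w) (hpos : ∀ t, 0 < w t)
    (hineq : ∀ t, δ^2 * w t - c * (w t)^2 ≤ deriv (deriv w) t)
    (hconv : ∀ t, w t < 2*ε → 0 < deriv (deriv w) t) :
    ∃ c₁ > (0:ℝ), ∀ tstar t₁ : ℝ, tstar < t₁ → w tstar = ε →
      (∀ t ∈ Set.Ico tstar t₁, deriv w t < 0) →
      ∀ t ∈ Set.Ioc tstar t₁, t - tstar ≤ (1/δ) * Real.log (w tstar / w t) + c₁ := by
  -- differentiability facts
  have h2' : ContDiff ℝ (1+1 : WithTop ℕ∞) w := by norm_num at hw ⊢; exact hw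
  have hdw1 : ContDiff ℝ 1 (deriv w) := (contDiff_succ_iff_deriv.mp h2').2.2
  have hw1 : Differentiable ℝ w := hw.differentiable (by norm_num)
  have hdw : Differentiable ℝ (deriv w) := hdw1.differentiable (by norm_num)
  have hwc : Continuous w := hw1.continuous
  have hdwc : Continuous (deriv w) := hdw1.continuous
  have hδ2 : (0:ℝ) < δ^2 := by positivity
  have hcε : 2*(c*ε) ≤ δ^2 := by
    rw [lt_div_iff₀ (by positivity)] at hε'
    nlinarith
  set K : ℝ := (8*c/(5*δ^2))*ε + 6/5 with hK
  refine ⟨K/δ + 2/δ + 1, by positivity, ?_⟩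
  intro tstar t₁ hlt hwts hderiv t ht
  set m := w t₁ with hm
  have hm0 : 0 < m := hpos t₁
  -- w is antitone on [tstar, t₁]
  have hanti : AntitoneOn w (Icc tstar t₁) := by
    apply antitoneOn_of_deriv_nonpos (convex_Icc _ _) hwc.continuousOn
      hw1.differentiableOn
    intro x hx
    rw [interior_Icc] at hx
    exact (hderiv x ⟨hx.1.le, hx.2⟩).le
  have hwle : ∀ s ∈ Icc tstar t₁, w s ≤ ε := fun s hs => by
    rw [← hwts]; exact hanti (left_mem_Icc.mpr hlt.le) hs hs.1
  have hwge : ∀ s ∈ Icc tstar t₁, m ≤ w s := fun s hs =>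
    hanti hs (right_mem_Icc.mpr hlt.le) hs.2
  -- energy E is antitone
  set E : ℝ → ℝ := fun s => (deriv w s)^2 - δ^2*(w s)^2 + (2*c/3)*(w s)^3 with hEdef
  have hEd : ∀ x, HasDerivAt E
      (2*(deriv w x)*(deriv (deriv w) x) - δ^2*(2*(w x)*(deriv w x)) + (2*c/3)*(3*(w x)^2*(deriv w x))) x := by
    intro x
    have h := (((hdw x).hasDerivAt.pow 2).sub (((hw1 x).hasDerivAt.pow 2).const_mul (δ^2))).add
      (((hw1 x).hasDerivAt.pow 3).const_mul (2*c/3))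
    exact h.congr_deriv (by push_cast; ring)
  have hEanti : AntitoneOn E (Icc tstar t₁) := by
    apply antitoneOn_of_deriv_nonpos (convex_Icc _ _)
      ((((hdwc.pow 2).sub (continuous_const.mul (hwc.pow 2))).add (continuous_const.mul (hwc.pow 3))).continuousOn)
    · exact fun x _ => (hEd x).differentiableAt.differentiableWithinAt
    · intro x hx
      rw [interior_Icc] at hx
      change deriv E x ≤ 0
      rw [(hEd x).deriv]
      have h1 : deriv w x < 0 := hderiv x ⟨hx.1.le, hx.2⟩
      have h2 := hineq x
      nlinarith [mul_nonneg (neg_nonneg.mpr h1.le) (sub_nonneg.mpr h2)]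
  have hEb : ∀ s ∈ Icc tstar t₁, δ^2*(w s)^2 - (2*c/3)*(w s)^3 - δ^2*m^2 ≤ (deriv w s)^2 := by
    intro s hs
    have h1 : E t₁ ≤ E s := hEanti hs (right_mem_Icc.mpr hlt.le) hs.2
    have h2 : -(δ^2*m^2) ≤ (deriv w t₁)^2 - δ^2*(w t₁)^2 + (2*c/3)*(w t₁)^3 := by
      rw [← hm]
      nlinarith [sq_nonneg (deriv w t₁), pow_pos hm0 3]
    simp only [hEdef] at h1
    nlinarith [h1, h2]
  -- key pointwise bounds where w ≥ 2m
  have hkey : ∀ s, tstar ≤ s → s < t₁ → 2*m ≤ w s →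
      3*δ^2*(deriv w s*w s) ≤ -(δ*(3*δ^2*(w s)^2 - 2*c*(w s)^3 - 3*δ^2*m^2)) ∧
      12*(deriv w s) ≤ -(5*δ*(w s)) := by
    intro s hs1 hs2 hsm
    have hws : 0 < w s := hpos s
    have hwsε : w s ≤ ε := hwle s ⟨hs1, hs2.le⟩
    have hv : deriv w s < 0 := hderiv s ⟨hs1, hs2⟩
    set Q : ℝ := 3*δ^2*(w s)^2 - 2*c*(w s)^3 - 3*δ^2*m^2 with hQdef
    have ha : 2*c*(w s) ≤ δ^2 := by nlinarith
    have ha' : 2*c*(w s)^3 ≤ δ^2*(w s)^2 := by nlinarith [mul_le_mul_of_nonneg_right ha (sq_nonneg (w s))]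
    have hb : 4*m^2 ≤ (w s)^2 := by nlinarith [mul_nonneg (sub_nonneg.2 hsm) (by positivity : (0:ℝ) ≤ w s + 2*m)]
    have hQ1 : 5/4*(δ^2*(w s)^2) ≤ Q := by
      rw [hQdef]; nlinarith [mul_le_mul_of_nonneg_left hb (le_of_lt hδ2)]
    have hQ2 : Q ≤ 3*(δ^2*(w s)^2) := by
      rw [hQdef]
      nlinarith [mul_pos hc (pow_pos hws 3), mul_pos hδ2 (mul_pos hm0 hm0), sq_nonneg m]
    have hQpos : 0 < Q := lt_of_lt_of_le (by positivity) hQ1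
    have hE3 : Q ≤ 3*(deriv w s)^2 := by
      have h := hEb s ⟨hs1, hs2.le⟩
      rw [hQdef]; nlinarith [h]
    have hsq : (δ*Q)^2 ≤ (3*δ^2*(deriv w s*w s))^2 := by
      have t1 : Q*Q ≤ (3*(δ^2*(w s)^2))*(3*(deriv w s)^2) :=
        mul_le_mul hQ2 hE3 hQpos.le (by positivity)
      nlinarith [t1, hδ2, sq_nonneg (deriv w s * w s)]
    have hneg : 3*δ^2*(deriv w s*w s) < 0 := by
      have := mul_neg_of_neg_of_pos hv hws
      nlinarith [this, hδ2]
    have hδQ : 0 < δ*Q := by positivity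
    have hf1 : 3*δ^2*(deriv w s*w s) ≤ -(δ*Q) := by
      have hYX : 0 < δ*Q - 3*δ^2*(deriv w s*w s) := by linarith
      nlinarith [hsq, hYX]
    refine ⟨hf1, ?_⟩
    have P1 : δ^2*((12*deriv w s)*(w s)) ≤ δ^2*((-(5*δ*(w s)))*(w s)) := by
      nlinarith [hf1, mul_le_mul_of_nonneg_left hQ1 hδ.le]
    have P2 : (12*deriv w s)*(w s) ≤ (-(5*δ*(w s)))*(w s) := le_of_mul_le_mul_left P1 hδ2
    have := le_of_mul_le_mul_right P2 hws
    linarith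
  -- the Lyapunov function Φ
  set Φ : ℝ → ℝ := fun s =>
    Real.log (w s) + δ*s + (8*c/(5*δ^2))*(w s) + (-(6/5)*m^2)*((w s)^2)⁻¹ with hΦdef
  have hΦd : ∀ x, HasDerivAt Φ
      (deriv w x / w x + δ + (8*c/(5*δ^2))*(deriv w x) + (12/5*m^2)*(deriv w x/(w x)^3)) x := by
    intro x
    have hne : w x ≠ 0 := (hpos x).ne'
    have h1 : HasDerivAt (fun s => Real.log (w s)) (deriv w x / w x) x := ((hw1 x).hasDerivAt).log hne
    have h2 : HasDerivAt (fun s : ℝ => δ*s) δ x := by simpa using (hasDerivAt_id x).const_mul δ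
    have h3 := ((hw1 x).hasDerivAt).const_mul (8*c/(5*δ^2))
    have h4 : HasDerivAt (fun s => ((w s)^2)⁻¹) (-(2*(w x)*(deriv w x))/((w x)^2)^2) x := by
      have h := ((hw1 x).hasDerivAt.pow 2).inv (pow_ne_zero 2 hne)
      exact h.congr_deriv (by push_cast [Pi.pow_apply]; ring)
    have h5 := h4.const_mul (-(6/5)*m^2)
    have h := ((h1.add h2).add h3).add h5
    have hδ2' : δ^2 ≠ 0 := by positivity
    exact h.congr_deriv (by field_simp; ring)
  have hΦdiff : Differentiable ℝ Φ := fun x => (hΦd x).differentiableAt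
  -- phase 1 estimate
  have phase1 : ∀ τ, tstar ≤ τ → τ ≤ t₁ → (∀ s, tstar ≤ s → s < τ → 2*m ≤ w s) →
      δ*(τ - tstar) ≤ Real.log (ε/(w τ)) + K := by
    intro τ hτ1 hτ2 hbelow
    have hΦanti : AntitoneOn Φ (Icc tstar τ) := by
      apply antitoneOn_of_deriv_nonpos (convex_Icc _ _) hΦdiff.continuous.continuousOn
        hΦdiff.differentiableOn
      intro x hx
      rw [interior_Icc] at hx
      rw [(hΦd x).deriv]
      obtain ⟨f1, f2⟩ := hkey x hx.1.le (lt_of_lt_of_le hx.2 hτ2) (hbelow x hx.1.le hx.2)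
      have hws : 0 < w x := hpos x
      have A := mul_le_mul_of_nonneg_right f1 (show (0:ℝ) ≤ 5*(w x) by positivity)
      have B := mul_le_mul_of_nonneg_left f2 (show (0:ℝ) ≤ 2*c*(w x)^3 by positivity)
      have Cc := mul_le_mul_of_nonneg_left f2 (show (0:ℝ) ≤ 3*δ^2*m^2 by positivity)
      have key : 15*δ^2*(deriv w x*(w x)^2) + 15*δ^3*(w x)^3 + 24*c*(deriv w x*(w x)^3)
          + 36*δ^2*m^2*(deriv w x) ≤ 0 := by nlinarith [A, B, Cc]
      have hrw : deriv w x / w x + δ + (8*c/(5*δ^2))*(deriv w x) + (12/5*m^2)*(deriv w x/(w x)^3)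
          = (15*δ^2*(deriv w x*(w x)^2) + 15*δ^3*(w x)^3 + 24*c*(deriv w x*(w x)^3)
            + 36*δ^2*m^2*(deriv w x)) / (15*δ^2*(w x)^3) := by
        have hδ2' : δ^2 ≠ 0 := by positivity
        field_simp
        ring
      rw [hrw]
      exact div_nonpos_of_nonpos_of_nonneg key (by positivity)
    have hΦle : Φ τ ≤ Φ tstar := hΦanti (left_mem_Icc.mpr hτ1) ⟨hτ1, le_refl τ⟩ hτ1
    have hτm : τ ∈ Icc tstar t₁ := ⟨hτ1, hτ2⟩
    have hwτpos : 0 < w τ := hpos τ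
    have hwτε : w τ ≤ ε := hwle τ hτm
    have hwτm : m ≤ w τ := hwge τ hτm
    simp only [hΦdef] at hΦle
    rw [hwts] at hΦle
    have e1 : Real.log ε - Real.log (w τ) = Real.log (ε/(w τ)) :=
      (Real.log_div hε.ne' hwτpos.ne').symm
    have e2 : (0:ℝ) ≤ (8*c/(5*δ^2))*(w τ) := by positivity
    have e3 : m^2*((w τ)^2)⁻¹ ≤ 1 := by
      rw [← div_eq_mul_inv, div_le_one (by positivity)]
      nlinarith [hwτm, hm0]
    have e4 : (0:ℝ) ≤ m^2*(ε^2)⁻¹ := by positivity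
    have e5 : (8*c/(5*δ^2))*ε ≤ K := by rw [hK]; norm_num
    nlinarith [hΦle, e2, e3, e4]
  -- conclusion
  have hwt0 : 0 < w t := hpos t
  have htm : t ∈ Icc tstar t₁ := ⟨ht.1.le, ht.2⟩
  rw [hwts]
  by_cases hcase : 2*m ≤ w t
  · -- phase 1 covers everything
    have hbelowA : ∀ s, tstar ≤ s → s < t → 2*m ≤ w s := fun s h1 h2 =>
      le_trans hcase (hanti ⟨h1, le_trans h2.le ht.2⟩ htm h2.le)
    have p1 := phase1 t ht.1.le ht.2 hbelowA
    clear_value K m E Φ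
    clear hEd hEanti hEb hkey phase1 hΦd hΦdiff hconv hineq hanti
    have : t - tstar ≤ (Real.log (ε/(w t)) + K)/δ := by
      rw [le_div_iff₀ hδ]; linarith [p1]
    have hrw : (Real.log (ε/(w t)) + K)/δ = (1/δ)*Real.log (ε/(w t)) + K/δ := by ring
    have h2δ : 0 ≤ 2/δ := by positivity
    linarith [this, hrw ▸ this]
  · push_neg at hcase
    set S : Set ℝ := {s | s ∈ Icc tstar t ∧ w s < 2*m} with hSdef
    have htS : t ∈ S := ⟨⟨ht.1.le, le_refl t⟩, hcase⟩
    have hSbd : BddBelow S := ⟨tstar, fun s hs => hs.1.1⟩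
    obtain ⟨t₂, ht₂def⟩ : ∃ x : ℝ, x = sInf S := ⟨_, rfl⟩
    have h2a : tstar ≤ t₂ := ht₂def ▸ le_csInf ⟨t, htS⟩ (fun s hs => hs.1.1)
    have h2b : t₂ ≤ t := ht₂def ▸ csInf_le hSbd htS
    have h2c : t₂ ≤ t₁ := le_trans h2b ht.2
    have hbelow : ∀ s, tstar ≤ s → s < t₂ → 2*m ≤ w s := by
      intro s h1 h2
      by_contra hcon
      push_neg at hcon
      have hsS : s ∈ S := ⟨⟨h1, le_trans h2.le h2b⟩, hcon⟩
      exact absurd (ht₂def ▸ csInf_le hSbd hsS) (not_le.mpr h2)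
    have p1 := phase1 t₂ h2a h2c hbelow
    -- w t₂ ≤ 2 m
    have hw2m : w t₂ ≤ 2*m := by
      by_contra hcon
      push_neg at hcon
      obtain ⟨η, hη, hball⟩ := Metric.continuousAt_iff.mp hwc.continuousAt (w t₂ - 2*m) (by linarith)
      obtain ⟨s', hs'S, hs'lt⟩ := exists_lt_of_csInf_lt ⟨t, htS⟩ (show sInf S < t₂ + η by rw [← ht₂def]; linarith)
      have h1 : t₂ ≤ s' := ht₂def ▸ csInf_le hSbd hs'S
      have hd : dist s' t₂ < η := by
        rw [Real.dist_eq, abs_of_nonneg (by linarith)]; linarith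
      have h3 := hball hd
      rw [Real.dist_eq] at h3
      have h4 : w s' < 2*m := hs'S.2
      rcases abs_lt.mp h3 with ⟨h5, _⟩
      linarith
    -- deriv w t₁ ≤ 0
    have hdt₁ : deriv w t₁ ≤ 0 := by
      have htend : Filter.Tendsto (deriv w) (nhdsWithin t₁ (Iio t₁)) (nhds (deriv w t₁)) :=
        (hdwc.continuousAt).continuousWithinAt
      apply le_of_tendsto htend
      filter_upwards [Ioo_mem_nhdsLT_of_mem (show t₁ ∈ Ioc tstar t₁ from ⟨hlt, le_refl t₁⟩)] with s hs
      exact (hderiv s ⟨hs.1.le, hs.2⟩).le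
    -- q monotone: deriv w x ≤ -(δ²m/2)(t₁ - x) on (t₂, t₁)
    have hqd : ∀ x, HasDerivAt (fun x => deriv w x - (δ^2*m/2)*x) (deriv (deriv w) x - δ^2*m/2) x := by
      intro x
      have h := ((hdw x).hasDerivAt).sub ((hasDerivAt_id x).const_mul (δ^2*m/2))
      exact h.congr_deriv (by ring)
    have hqmono : MonotoneOn (fun x => deriv w x - (δ^2*m/2)*x) (Icc t₂ t₁) := by
      have hqdiff : Differentiable ℝ (fun x => deriv w x - (δ^2*m/2)*x) :=
        fun x => (hqd x).differentiableAt
      apply monotoneOn_of_deriv_nonneg (convex_Icc _ _)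
        hqdiff.continuous.continuousOn
        hqdiff.differentiableOn
      intro x hx
      rw [interior_Icc] at hx
      rw [(hqd x).deriv]
      have hx' : x ∈ Icc tstar t₁ := ⟨le_trans h2a hx.1.le, hx.2.le⟩
      have h1 := hineq x
      have h2 := hwle x hx'
      have h3 := hwge x hx'
      have h4 : c*(w x) ≤ δ^2/2 := by nlinarith
      have h5 : (c*(w x))*(w x) ≤ (δ^2/2)*(w x) := mul_le_mul_of_nonneg_right h4 (hpos x).le
      have h6 : (δ^2/2)*m ≤ (δ^2/2)*(w x) := mul_le_mul_of_nonneg_left h3 (by positivity)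
      nlinarith [h1, h5, h6]
    have hqcons : ∀ x ∈ Ioo t₂ t₁, deriv w x ≤ -(δ^2*m/2)*(t₁ - x) := by
      intro x hx
      have := hqmono ⟨hx.1.le, hx.2.le⟩ (right_mem_Icc.mpr (le_trans hx.1.le hx.2.le)) hx.2.le
      simp only at this
      nlinarith [this, hdt₁]
    -- h antitone: w t₂ - (δ²m/4)(t₁-t₂)² ≥ m
    have hhd : ∀ x, HasDerivAt (fun x => w x - (δ^2*m/4)*(t₁ - x)^2)
        (deriv w x + (δ^2*m/2)*(t₁ - x)) x := by
      intro x
      have hgg : HasDerivAt (fun x : ℝ => (t₁ - x)^2) (2*(t₁-x)*(-1)) x := by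
        have := ((hasDerivAt_id x).const_sub t₁).pow 2
        exact this.congr_deriv (by push_cast [id_eq]; ring)
      have h := ((hw1 x).hasDerivAt).sub (hgg.const_mul (δ^2*m/4))
      exact h.congr_deriv (by ring)
    have hhanti : AntitoneOn (fun x => w x - (δ^2*m/4)*(t₁ - x)^2) (Icc t₂ t₁) := by
      have hhdiff : Differentiable ℝ (fun x => w x - (δ^2*m/4)*(t₁ - x)^2) :=
        fun x => (hhd x).differentiableAt
      apply antitoneOn_of_deriv_nonpos (convex_Icc _ _)
        hhdiff.continuous.continuousOn
        hhdiff.differentiableOn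
      intro x hx
      rw [interior_Icc] at hx
      rw [(hhd x).deriv]
      have := hqcons x hx
      linarith
    have hlen : t₁ - t₂ ≤ 2/δ := by
      have h1 := hhanti (left_mem_Icc.mpr h2c) (right_mem_Icc.mpr h2c) h2c
      simp only [sub_self] at h1
      -- w t₂ - (δ²m/4)(t₁-t₂)² ≥ w t₁ - 0 = m
      have h2 : (δ^2*m/4)*(t₁-t₂)^2 ≤ m := by nlinarith [h1, hw2m]
      have h3 : (t₁-t₂)^2 ≤ 4/δ^2 := by
        rw [le_div_iff₀ hδ2]
        nlinarith [h2, hm0]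
      have h4 : 0 ≤ t₁ - t₂ := by linarith
      have h5 := Real.sqrt_le_sqrt h3
      rw [Real.sqrt_sq h4, show (4:ℝ)/δ^2 = (2/δ)^2 by ring,
        Real.sqrt_sq (by positivity : (0:ℝ) ≤ 2/δ)] at h5
      exact h5
    -- combine
    clear_value K m E Φ S
    clear hqd hqmono hqcons hhd hEd hEanti hEb hkey phase1 hΦd hΦdiff hconv hineq hhanti
    have hlog : Real.log (ε/(w t₂)) ≤ Real.log (ε/(w t)) := by
      have hwt₂ : 0 < w t₂ := hpos t₂
      have hwtle : w t ≤ w t₂ := hanti ⟨h2a, h2c⟩ htm h2b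
      apply Real.log_le_log (by positivity)
      exact div_le_div_of_nonneg_left hε.le hwt0 hwtle
    have hstep : t₂ - tstar ≤ (Real.log (ε/(w t)) + K)/δ := by
      rw [le_div_iff₀ hδ]
      linarith [p1, hlog]
    have hrw : (Real.log (ε/(w t)) + K)/δ = (1/δ)*Real.log (ε/(w t)) + K/δ := by ring
    have : t - t₂ ≤ 2/δ := by linarith [ht.2, hlen]
    linarith [hstep, hrw ▸ hstep, this]
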